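/- Let S : ℝ → ℝ be continuous with M(x) := sup_{y ≤ x} S(y) finite for all x. If [u, v] is an interval on which S(z) < M(z) for all z ∈ (u, v], then M is constant on [u, v] and the increments of TS are the negatives of those of S: for x, y ∈ [u, v], TS(x) − TS(y) = S(y) − S(x). -/

import Mathlib

noncomputable def pastMax (S : ℝ → ℝ) (x : ℝ) : ℝ := sSup (S '' Set.Iic x)

noncomputable def pitman (S : ℝ → ℝ) (x : ℝ) : ℝ :=
  2 * pastMax S x - S x - 2 * pastMax S 0

theorem pitman_increments_below_max (S : ℝ → ℝ) (hS : Continuous S)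
    (hB : ∀ x : ℝ, BddAbove (S '' Set.Iic x))
    (u v : ℝ) (huv : u ≤ v)
    (h : ∀ z ∈ Set.Ioc u v, S z < pastMax S z) :
    (∀ x ∈ Set.Icc u v, pastMax S x = pastMax S u) ∧
    (∀ x ∈ Set.Icc u v, ∀ y ∈ Set.Icc u v,
      pitman S x - pitman S y = S y - S x) := by
  have hmono : Monotone (pastMax S) := fun a b hab =>
    csSup_le_csSup (hB b) ⟨S a, ⟨a, le_refl a, rfl⟩⟩
      (Set.image_mono (Set.Iic_subset_Iic.mpr hab))
  have hconst : ∀ x ∈ Set.Icc u v, pastMax S x = pastMax S u := by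
    rintro x ⟨hux, hxv⟩
    refine le_antisymm ?_ (hmono hux)
    by_contra hlt
    push_neg at hlt
    obtain ⟨z, hz, hzmax⟩ := (isCompact_Icc (a := u) (b := x)).exists_isMaxOn
      (Set.nonempty_Icc.mpr hux) hS.continuousOn
    have hMx : pastMax S x ≤ max (pastMax S u) (S z) := by
      refine csSup_le ⟨S x, ⟨x, le_refl x, rfl⟩⟩ ?_
      rintro a ⟨y, hy, rfl⟩
      rcases le_or_gt y u with hyu | hyu
      · exact le_max_of_le_left (le_csSup (hB u) ⟨y, hyu, rfl⟩)
      · exact le_max_of_le_right (hzmax ⟨hyu.le, hy⟩)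
    have hSz : pastMax S x ≤ S z := (le_max_iff.mp hMx).resolve_left (not_le.mpr hlt)
    have huz : u < z := by
      rcases hz.1.lt_or_eq with h1 | h1
      · exact h1
      · exact absurd (hSz.trans (h1 ▸ le_csSup (hB u) ⟨u, le_refl u, rfl⟩))
          (not_le.mpr hlt)
    have := h z ⟨huz, hz.2.trans hxv⟩
    exact absurd ((hmono hz.2).trans hSz) (not_le.mpr this)
  refine ⟨hconst, fun x hx y hy => ?_⟩
  unfold pitman
  rw [hconst x hx, hconst y hy]
  ring
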